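/- Let M be an n×n real matrix, δ a delay matrix with zero diagonal and max δ ≤ κ, and let c ∈ ℝ. Then every eigenvalue μ of (cM)^{(δ,κ)} with μ ≠ 0 satisfies: μ is an eigenvalue of (cM)^{(δ,κ)} if and only if there exists v₀ ≠ 0 with μ (v₀)_i = Σ_j μ^{-δ_{ji}} c M_{ij} (v₀)_j for all i (interpreting the equation after multiplying through by μ^{max δ}). -/

import Mathlib

open Matrix

/-- Spectral radius of a complex matrix: sup of moduli of its spectrum. -/
noncomputable def specRad {m : Type*} [Fintype m] [DecidableEq m] (A : Matrix m m ℂ) : ℝ :=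
  sSup ((fun z : ℂ => ‖z‖) '' spectrum ℂ A)

/-- Eigenvalue criterion for complex matrices. -/
lemma mem_spectrum_iff_exists_vec {m : Type*} [Fintype m] [DecidableEq m]
    (A : Matrix m m ℂ) (μ : ℂ) :
    μ ∈ spectrum ℂ A ↔ ∃ v : m → ℂ, v ≠ 0 ∧ A *ᵥ v = μ • v := by
  rw [spectrum.mem_iff, Matrix.isUnit_iff_isUnit_det, isUnit_iff_ne_zero, not_not,
    ← Matrix.exists_mulVec_eq_zero_iff]
  constructor
  · rintro ⟨v, hv, h⟩
    refine ⟨v, hv, ?_⟩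
    rw [sub_mulVec, Algebra.algebraMap_eq_smul_one, smul_mulVec, one_mulVec,
      sub_eq_zero] at h
    exact h.symm
  · rintro ⟨v, hv, h⟩
    refine ⟨v, hv, ?_⟩
    rw [sub_mulVec, Algebra.algebraMap_eq_smul_one, smul_mulVec, one_mulVec, h, sub_self]

/-- Delayed iteration operator `M^(δ,κ)` on the history space `ℝ^((κ+1)n)` (complexified).
The partition of `M` into `ℓ × ℓ` blocks is encoded by `p : Fin n → Fin ℓ` assigning each
row/column index to its block.  The history vector `v` stores `v (s, ·) = x^(κ - s)`,
and the operator maps `(x^(κ), …, x^(0))` to `(x^(κ+1), …, x^(1))` where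
`x^(κ+1)_i = ∑_j M_{ij} x^(κ - δ_{ji})_j`. -/
noncomputable def delayedOp (n ℓ κ : ℕ) (M : Matrix (Fin n) (Fin n) ℝ)
    (p : Fin n → Fin ℓ) (δ : Fin ℓ → Fin ℓ → ℕ) :
    Matrix (Fin (κ + 1) × Fin n) (Fin (κ + 1) × Fin n) ℂ :=
  fun st tb =>
    if st.1.val = 0 then
      (if tb.1.val = δ (p tb.2) (p st.2) then (M st.2 tb.2 : ℂ) else 0)
    else
      (if tb.1.val + 1 = st.1.val ∧ st.2 = tb.2 then 1 else 0)

/-- Nonzero eigenvalues of the delayed operator of c*M are exactly the solutions of the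
polynomial eigenvalue problem mu^(k+1) v0 = sum_j mu^(k - delta_ji) c M_ij (v0)_j. -/
theorem delayed_polynomial_eigenproblem (n ℓ κ : ℕ) (M : Matrix (Fin n) (Fin n) ℝ)
    (p : Fin n → Fin ℓ) (δ : Fin ℓ → Fin ℓ → ℕ)
    (hδ0 : ∀ i, δ i i = 0) (hκ : ∀ i j, δ i j ≤ κ)
    (c : ℝ) (μ : ℂ) (hμ : μ ≠ 0) :
    μ ∈ spectrum ℂ (delayedOp n ℓ κ (c • M) p δ) ↔
      ∃ v₀ : Fin n → ℂ, v₀ ≠ 0 ∧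
        ∀ a : Fin n, μ ^ (κ + 1) * v₀ a
          = ∑ b : Fin n, μ ^ (κ - δ (p b) (p a)) * ((c * M a b : ℝ) : ℂ) * v₀ b := by
  set A := delayedOp n ℓ κ (c • M) p δ with hA
  -- shift rows
  have hshift : ∀ (v : Fin (κ+1) × Fin n → ℂ) (s : Fin (κ+1)) (i : Fin n), s.val ≠ 0 →
      (A *ᵥ v) (s, i) = v (⟨s.val - 1, by omega⟩, i) := by
    intro v s i hs
    have hslt := s.isLt
    simp only [hA, mulVec, dotProduct, delayedOp, hs, if_false]
    rw [Finset.sum_eq_single ((⟨s.val - 1, by omega⟩ : Fin (κ+1)), i)]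
    · simp [Nat.sub_add_cancel (Nat.one_le_iff_ne_zero.2 hs)]
    · rintro ⟨t, b⟩ - hne
      have hc : ¬((t : ℕ) + 1 = s.val ∧ i = b) := by
        rintro ⟨h1, h2⟩
        exact hne (Prod.ext_iff.mpr ⟨Fin.ext (show (t:ℕ) = s.val - 1 by omega), h2.symm⟩)
      rw [if_neg hc, zero_mul]
    · exact fun h => absurd (Finset.mem_univ _) h
  -- top row
  have htop : ∀ (v : Fin (κ+1) × Fin n → ℂ) (i : Fin n),
      (A *ᵥ v) (⟨0, by omega⟩, i)
        = ∑ b : Fin n, ((c * M i b : ℝ) : ℂ) * v (⟨δ (p b) (p i), Nat.lt_succ_of_le (hκ _ _)⟩, b) := by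
    intro v i
    simp only [hA, mulVec, dotProduct, delayedOp, if_true]
    rw [Fintype.sum_prod_type, Finset.sum_comm]
    refine Finset.sum_congr rfl fun b _ => ?_
    rw [Finset.sum_eq_single (⟨δ (p b) (p i), Nat.lt_succ_of_le (hκ _ _)⟩ : Fin (κ+1))]
    · simp [Matrix.smul_apply, smul_eq_mul]
    · rintro t - hne
      rw [if_neg (fun h => hne (Fin.ext h)), zero_mul]
    · exact fun h => absurd (Finset.mem_univ _) h
  rw [mem_spectrum_iff_exists_vec]
  constructor
  · rintro ⟨v, hv, heq⟩
    set v₀ : Fin n → ℂ := fun b => v (⟨κ, Nat.lt_succ_self κ⟩, b) with hv₀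
    have hrec : ∀ t : ℕ, t ≤ κ → ∀ i, v (⟨κ - t, by omega⟩, i) = μ ^ t * v₀ i := by
      intro t
      induction t with
      | zero => intro _ i; simp [hv₀]
      | succ t ih =>
        intro ht i
        have h1 : (A *ᵥ v) (⟨κ - t, by omega⟩, i) = μ * v (⟨κ - t, by omega⟩, i) := by
          rw [heq]; rfl
        rw [hshift v _ i (by simp; omega)] at h1
        have h2 : (⟨κ - t - 1, by omega⟩ : Fin (κ+1)) = ⟨κ - (t+1), by omega⟩ :=
          Fin.ext (show κ - t - 1 = κ - (t+1) by omega)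
        rw [h2] at h1
        rw [h1, ih (by omega) i, pow_succ]
        ring
    have hval : ∀ (s : Fin (κ+1)) (i : Fin n), v (s, i) = μ ^ (κ - s.val) * v₀ i := by
      intro s i
      have hslt := s.isLt
      have := hrec (κ - s.val) (by omega) i
      have h2 : (⟨κ - (κ - s.val), by omega⟩ : Fin (κ+1)) = s := Fin.ext (show κ - (κ - s.val) = s.val by omega)
      rwa [h2] at this
    refine ⟨v₀, ?_, ?_⟩
    · intro h0
      apply hv
      funext q
      have := hval q.1 q.2
      rw [h0] at this
      simpa using this
    · intro a
      have h1 : (A *ᵥ v) (⟨0, by omega⟩, a) = μ * v (⟨0, by omega⟩, a) := by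
        rw [heq]; rfl
      rw [htop v a] at h1
      rw [hval ⟨0, by omega⟩ a] at h1
      simp only [hval] at h1
      calc μ ^ (κ + 1) * v₀ a = μ * (μ ^ (κ - 0) * v₀ a) := by
            rw [Nat.sub_zero, pow_succ]; ring
        _ = ∑ b : Fin n, μ ^ (κ - δ (p b) (p a)) * ((c * M a b : ℝ) : ℂ) * v₀ b := by
            rw [← h1]; exact Finset.sum_congr rfl fun b _ => by ring
  · rintro ⟨v₀, hv₀, hpoly⟩
    obtain ⟨b0, hb0⟩ := Function.ne_iff.mp hv₀
    refine ⟨fun q => μ ^ (κ - q.1.val) * v₀ q.2, ?_, ?_⟩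
    · intro h
      apply hb0
      have := congrFun h (⟨κ, Nat.lt_succ_self κ⟩, b0)
      simpa using this
    · funext q
      obtain ⟨s, i⟩ := q
      have hslt := s.isLt
      by_cases hs : s.val = 0
      · have hs' : s = ⟨0, Nat.succ_pos κ⟩ := Fin.ext hs
        subst hs'
        rw [htop]
        simp only [Pi.smul_apply, smul_eq_mul]
        calc ∑ b : Fin n, ((c * M i b : ℝ) : ℂ) * (μ ^ (κ - δ (p b) (p i)) * v₀ b)
            = ∑ b : Fin n, μ ^ (κ - δ (p b) (p i)) * ((c * M i b : ℝ) : ℂ) * v₀ b :=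
              Finset.sum_congr rfl fun b _ => by ring
          _ = μ ^ (κ + 1) * v₀ i := (hpoly i).symm
          _ = μ * (μ ^ (κ - 0) * v₀ i) := by rw [Nat.sub_zero, pow_succ]; ring
      · rw [hshift _ s i hs]
        simp only [Pi.smul_apply, smul_eq_mul]
        have : κ - (s.val - 1) = (κ - s.val) + 1 := by omega
        rw [this, pow_succ]
        ring
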